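/- arXiv:gr-qc/0210078 — 3 statements merged into one kernel-verified Lean document; each statement's English description precedes it below -/
import Mathlib

section
/- The functions q₁(t) = (t+k)², q₂(t) = (t−k)/(t+k), π₁(t) = −2t/(t+k)², π₂(t) = −2(t+k), N(t) = ((t+k)/(t−k))^{1/2} satisfy the Hamilton evolution equations: q₁' = −N√q₂ π₂, π₁' = (1/2) N π₂² q₂^{3/2} q₁^{−2}, q₂' = −N√q₂(π₁ − π₂ q₁^{−1} q₂), and π₂' = (1/4) N q₂^{−1/2}(2(π₁π₂ − 2) − 3π₂² q₁^{−1} q₂), on any interval where t − k > 0. -/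
noncomputable section

/-- Scale factor `q₁` of the exact Bianchi III vacuum solution. -/
def q₁B (k t : ℝ) : ℝ := (t + k) ^ 2
/-- Scale factor `q₂` of the exact Bianchi III vacuum solution. -/
def q₂B (k t : ℝ) : ℝ := (t - k) / (t + k)
/-- Momentum `π₁` of the exact Bianchi III vacuum solution. -/
def π₁B (k t : ℝ) : ℝ := -2 * t / (t + k) ^ 2
/-- Momentum `π₂` of the exact Bianchi III vacuum solution. -/
def π₂B (k t : ℝ) : ℝ := -2 * (t + k)
/-- Lapse `N = q₂^{-1/2}` of the exact Bianchi III vacuum solution. -/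
def NB (k t : ℝ) : ℝ := Real.sqrt ((t + k) / (t - k))

/-- The exact Bianchi III vacuum solution satisfies the Hamilton evolution equations
generated by `H₀ = N√q₂(−π₁π₂ + (1/2)π₂² q₁⁻¹ q₂ + 2)`. -/
theorem bianchiIII_hamilton_equations (k t : ℝ) (ht : t - k > 0) (ht' : t + k > 0) :
    HasDerivAt (q₁B k) (-(NB k t) * Real.sqrt (q₂B k t) * π₂B k t) t ∧
    HasDerivAt (π₁B k)
      ((1 / 2) * NB k t * (π₂B k t) ^ 2 * (Real.sqrt (q₂B k t)) ^ 3 * ((q₁B k t) ^ 2)⁻¹) t ∧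
    HasDerivAt (q₂B k)
      (-(NB k t) * Real.sqrt (q₂B k t) * (π₁B k t - π₂B k t * (q₁B k t)⁻¹ * q₂B k t)) t ∧
    HasDerivAt (π₂B k)
      ((1 / 4) * NB k t * (Real.sqrt (q₂B k t))⁻¹ *
        (2 * (π₁B k t * π₂B k t - 2) - 3 * (π₂B k t) ^ 2 * (q₁B k t)⁻¹ * q₂B k t)) t := by
  have hA : t + k ≠ 0 := ne_of_gt ht'
  have hB : t - k ≠ 0 := ne_of_gt ht
  have hq₂pos : 0 < q₂B k t := div_pos ht ht'
  have hs : Real.sqrt (q₂B k t) > 0 := Real.sqrt_pos.mpr hq₂pos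
  have hs2 : Real.sqrt (q₂B k t) ^ 2 = q₂B k t := Real.sq_sqrt hq₂pos.le
  have hns : NB k t * Real.sqrt (q₂B k t) = 1 := by
    rw [NB, q₂B, ← Real.sqrt_mul (by positivity), div_mul_div_comm]
    rw [show (t + k) * (t - k) = (t - k) * (t + k) by ring, div_self (by positivity)]
    exact Real.sqrt_one
  set s := Real.sqrt (q₂B k t) with hsdef
  set n := NB k t with hndef
  refine ⟨?_, ?_, ?_, ?_⟩
  · have h : HasDerivAt (q₁B k) (2 * (t + k)) t := by
      have := ((hasDerivAt_id t).add_const k).pow 2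
      show HasDerivAt (fun t => (t + k) ^ 2) _ t; simpa [Pi.pow_def] using this
    convert h using 1
    have : -n * s * π₂B k t = -(n * s) * π₂B k t := by ring
    rw [this, hns, π₂B]; ring
  · have h : HasDerivAt (π₁B k) ((-2 * (t + k) ^ 2 - (-2 * t) * (2 * (t + k))) / ((t + k) ^ 2) ^ 2) t := by
      have hf : HasDerivAt (fun t : ℝ => -2 * t) (-2) t := by
        have := (hasDerivAt_id t).const_mul (-2 : ℝ)
        simp only [mul_one] at this; exact this
      have hg : HasDerivAt (fun t : ℝ => (t + k) ^ 2) (2 * (t + k)) t := by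
        simpa [Pi.pow_def] using ((hasDerivAt_id t).add_const k).pow 2
      exact hf.div hg (by positivity)
    convert h using 1
    have : (1 / 2) * n * (π₂B k t) ^ 2 * s ^ 3 * ((q₁B k t) ^ 2)⁻¹
        = (1 / 2) * (n * s) * (s ^ 2) * (π₂B k t) ^ 2 * ((q₁B k t) ^ 2)⁻¹ := by ring
    rw [this, hns, hs2, π₂B, q₁B, q₂B]
    field_simp
    ring
  · have h : HasDerivAt (q₂B k) ((1 * (t + k) - (t - k) * 1) / (t + k) ^ 2) t := by
      have hf : HasDerivAt (fun t : ℝ => t - k) 1 t := (hasDerivAt_id t).sub_const k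
      have hg : HasDerivAt (fun t : ℝ => t + k) 1 t := (hasDerivAt_id t).add_const k
      have := hf.div hg hA; simp only [Pi.div_def] at this; exact this
    convert h using 1
    have : -n * s * (π₁B k t - π₂B k t * (q₁B k t)⁻¹ * q₂B k t)
        = -(n * s) * (π₁B k t - π₂B k t * (q₁B k t)⁻¹ * q₂B k t) := by ring
    rw [this, hns, π₁B, π₂B, q₁B, q₂B]
    field_simp
    ring
  · have h : HasDerivAt (π₂B k) (-2) t := by
      have := ((hasDerivAt_id t).add_const k).const_mul (-2 : ℝ)
      simp only [mul_one] at this; exact this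
    convert h using 1
    have key : n * s⁻¹ = (t + k) / (t - k) := by
      have : n * s⁻¹ = (n * s) / s ^ 2 := by field_simp
      rw [this, hns, hs2, q₂B, one_div_div]
    have : (1 / 4) * n * s⁻¹ *
        (2 * (π₁B k t * π₂B k t - 2) - 3 * (π₂B k t) ^ 2 * (q₁B k t)⁻¹ * q₂B k t)
        = (1 / 4) * (n * s⁻¹) *
        (2 * (π₁B k t * π₂B k t - 2) - 3 * (π₂B k t) ^ 2 * (q₁B k t)⁻¹ * q₂B k t) := by ring
    rw [this, key, π₁B, π₂B, q₁B, q₂B]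
    field_simp
    ring
end
end

section
/- Let Q : ℝ → ℝ be twice differentiable satisfying Q'' + (4k/((t+k)²(t−k))) Q = 0 on an interval where t−k > 0 and t+k > 0. Then the general solution is Q(t) = ((t−k)/(t+k)) (C₁ + C₂(t − 4k²/(t−k) + 4k log(t−k))) for constants C₁, C₂; equivalently, for every C₁, C₂ this formula defines a solution, and the two basic solutions are linearly independent. -/
open Real Filter Set

private lemma aux_hu (k t : ℝ) (h2 : t + k ≠ 0) :
    HasDerivAt (fun s : ℝ => (s - k) / (s + k)) (2 * k / (t + k) ^ 2) t := by
  have h := ((hasDerivAt_id t).sub_const k).div ((hasDerivAt_id t).add_const k) h2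
  refine h.congr_deriv ?_
  simp only [id_eq, Pi.add_apply, Pi.pow_apply, Nat.cast_ofNat]
  field_simp
  ring

private lemma aux_hu' (k t : ℝ) (h2 : t + k ≠ 0) :
    HasDerivAt (fun s : ℝ => 2 * k / (s + k) ^ 2) (-(4 * k) / (t + k) ^ 3) t := by
  have h := (hasDerivAt_const t (2 * k)).div (((hasDerivAt_id t).add_const k).pow 2)
    (pow_ne_zero 2 h2)
  refine h.congr_deriv ?_
  simp only [id_eq, Pi.add_apply, Pi.pow_apply, Nat.cast_ofNat]
  field_simp
  ring

private lemma aux_hg (k t : ℝ) (h1 : t - k ≠ 0) :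
    HasDerivAt (fun s : ℝ => s - 4 * k ^ 2 / (s - k) + 4 * k * Real.log (s - k))
      ((t + k) ^ 2 / (t - k) ^ 2) t := by
  have h := ((hasDerivAt_id t).sub ((hasDerivAt_const t (4 * k ^ 2)).div
      ((hasDerivAt_id t).sub_const k) h1)).add
    ((((hasDerivAt_id t).sub_const k).log h1).const_mul (4 * k))
  refine h.congr_deriv ?_
  simp only [id_eq, Pi.add_apply, Pi.pow_apply, Nat.cast_ofNat]
  field_simp
  ring

private lemma aux_hF (k t C₁ C₂ : ℝ) (h1 : t - k ≠ 0) (h2 : t + k ≠ 0) :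
    HasDerivAt (fun s : ℝ => (s - k) / (s + k) *
        (C₁ + C₂ * (s - 4 * k ^ 2 / (s - k) + 4 * k * Real.log (s - k))))
      (2 * k / (t + k) ^ 2 *
        (C₁ + C₂ * (t - 4 * k ^ 2 / (t - k) + 4 * k * Real.log (t - k)))
        + C₂ * ((t + k) / (t - k))) t := by
  have h := (aux_hu k t h2).mul ((hasDerivAt_const t C₁).add ((aux_hg k t h1).const_mul C₂))
  refine h.congr_deriv ?_
  simp only [id_eq, Pi.add_apply, Pi.pow_apply, Nat.cast_ofNat]
  field_simp
  ring

private lemma aux_hF' (k t C₁ C₂ : ℝ) (h1 : t - k ≠ 0) (h2 : t + k ≠ 0) :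
    HasDerivAt (fun s : ℝ => 2 * k / (s + k) ^ 2 *
        (C₁ + C₂ * (s - 4 * k ^ 2 / (s - k) + 4 * k * Real.log (s - k)))
        + C₂ * ((s + k) / (s - k)))
      (-(4 * k) / (t + k) ^ 3 *
        (C₁ + C₂ * (t - 4 * k ^ 2 / (t - k) + 4 * k * Real.log (t - k)))) t := by
  have h := ((aux_hu' k t h2).mul
      ((hasDerivAt_const t C₁).add ((aux_hg k t h1).const_mul C₂))).add
    ((((hasDerivAt_id t).add_const k).div ((hasDerivAt_id t).sub_const k) h1).const_mul C₂)
  refine h.congr_deriv ?_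
  simp only [id_eq, Pi.add_apply, Pi.pow_apply, Nat.cast_ofNat]
  field_simp
  ring

private lemma aux_const {c : ℝ} {f : ℝ → ℝ} (h : ∀ t ∈ Set.Ioi c, HasDerivAt f 0 t)
    {x y : ℝ} (hx : x ∈ Set.Ioi c) (hy : y ∈ Set.Ioi c) : f x = f y := by
  refine (convex_Ioi c).is_const_of_fderivWithin_eq_zero
    (fun t ht => (h t ht).differentiableAt.differentiableWithinAt) (fun t ht => ?_) hx hy
  rw [fderivWithin_of_isOpen isOpen_Ioi ht, (h t ht).hasFDerivAt.fderiv]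
  ext
  simp

/-- General solution of the zero-mode harmonic perturbation wave equation
`Q'' + (4k/((t+k)²(t−k))) Q = 0` on `t > |k|`:
every solution is of the claimed form, every such formula is a solution,
and the two basic solutions are linearly independent. -/
theorem harmonic_zero_mode_general_solution (k : ℝ) :
    (∀ Q Q' Q'' : ℝ → ℝ,
      (∀ t : ℝ, |k| < t → HasDerivAt Q (Q' t) t) →
      (∀ t : ℝ, |k| < t → HasDerivAt Q' (Q'' t) t) →
      (∀ t : ℝ, |k| < t → Q'' t + (4 * k / ((t + k) ^ 2 * (t - k))) * Q t = 0) →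
      ∃ C₁ C₂ : ℝ, ∀ t : ℝ, |k| < t →
        Q t = ((t - k) / (t + k)) *
          (C₁ + C₂ * (t - 4 * k ^ 2 / (t - k) + 4 * k * Real.log (t - k)))) ∧
    (∀ C₁ C₂ : ℝ, ∀ t : ℝ, |k| < t →
      deriv (deriv (fun t : ℝ => ((t - k) / (t + k)) *
          (C₁ + C₂ * (t - 4 * k ^ 2 / (t - k) + 4 * k * Real.log (t - k))))) t
        + (4 * k / ((t + k) ^ 2 * (t - k))) *
          (((t - k) / (t + k)) *
            (C₁ + C₂ * (t - 4 * k ^ 2 / (t - k) + 4 * k * Real.log (t - k)))) = 0) ∧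
    (∀ a b : ℝ,
      (∀ t : ℝ, |k| < t →
        a * ((t - k) / (t + k))
          + b * (((t - k) / (t + k)) *
              (t - 4 * k ^ 2 / (t - k) + 4 * k * Real.log (t - k))) = 0) →
      a = 0 ∧ b = 0) := by
  have hpos : ∀ t : ℝ, |k| < t → 0 < t - k ∧ 0 < t + k := by
    intro t ht
    obtain ⟨ha, hb⟩ := abs_lt.mp ht
    constructor <;> linarith
  refine ⟨?_, ?_, ?_⟩
  · -- part 1
    intro Q Q' Q'' hQ hQ' hODE
    set c1 : ℝ → ℝ := fun s => Q s *
        (2 * k / (s + k) ^ 2 * (s - 4 * k ^ 2 / (s - k) + 4 * k * Real.log (s - k))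
          + (s + k) / (s - k))
      - Q' s * ((s - k) / (s + k) * (s - 4 * k ^ 2 / (s - k) + 4 * k * Real.log (s - k)))
      with hc1def
    set c2 : ℝ → ℝ := fun s => Q' s * ((s - k) / (s + k)) - Q s * (2 * k / (s + k) ^ 2)
      with hc2def
    have hd1 : ∀ t ∈ Set.Ioi |k|, HasDerivAt c1 0 t := by
      intro t ht
      obtain ⟨h1, h2⟩ := hpos t ht
      have h1' := h1.ne'
      have h2' := h2.ne'
      have hv := aux_hF k t 0 1 h1' h2'
      have hvp := aux_hF' k t 0 1 h1' h2'
      simp only [zero_add, one_mul] at hv hvp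
      have h := ((hQ t ht).mul hvp).sub ((hQ' t ht).mul hv)
      refine h.congr_deriv ?_
      have hode := hODE t ht
      have hQ'' : Q'' t = -(4 * k / ((t + k) ^ 2 * (t - k))) * Q t := by linarith
      rw [hQ'']
      field_simp
      ring
    have hd2 : ∀ t ∈ Set.Ioi |k|, HasDerivAt c2 0 t := by
      intro t ht
      obtain ⟨h1, h2⟩ := hpos t ht
      have h1' := h1.ne'
      have h2' := h2.ne'
      have h := ((hQ' t ht).mul (aux_hu k t h2')).sub ((hQ t ht).mul (aux_hu' k t h2'))
      refine h.congr_deriv ?_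
      have hode := hODE t ht
      have hQ'' : Q'' t = -(4 * k / ((t + k) ^ 2 * (t - k))) * Q t := by linarith
      rw [hQ'']
      field_simp
      ring
    have ht0 : |k| < |k| + 1 := by linarith
    refine ⟨c1 (|k| + 1), c2 (|k| + 1), fun t ht => ?_⟩
    obtain ⟨h1, h2⟩ := hpos t ht
    have e1 : c1 (|k| + 1) = c1 t := aux_const hd1 ht0 ht
    have e2 : c2 (|k| + 1) = c2 t := aux_const hd2 ht0 ht
    rw [e1, e2, hc1def, hc2def]
    have h1' := h1.ne'
    have h2' := h2.ne'
    field_simp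
    ring
  · -- part 2
    intro C₁ C₂ t ht
    obtain ⟨h1, h2⟩ := hpos t ht
    have h1' := h1.ne'
    have h2' := h2.ne'
    have hev : deriv (fun t : ℝ => ((t - k) / (t + k)) *
          (C₁ + C₂ * (t - 4 * k ^ 2 / (t - k) + 4 * k * Real.log (t - k))))
        =ᶠ[nhds t] (fun s : ℝ => 2 * k / (s + k) ^ 2 *
          (C₁ + C₂ * (s - 4 * k ^ 2 / (s - k) + 4 * k * Real.log (s - k)))
          + C₂ * ((s + k) / (s - k))) := by
      filter_upwards [isOpen_Ioi.mem_nhds (show t ∈ Set.Ioi |k| from ht)] with s hs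
      obtain ⟨hs1, hs2⟩ := hpos s hs
      exact (aux_hF k s C₁ C₂ hs1.ne' hs2.ne').deriv
    rw [hev.deriv_eq, (aux_hF' k t C₁ C₂ h1' h2').deriv]
    field_simp
    ring
  · -- part 3
    intro a b hab
    have ht0 : |k| < |k| + 1 := by linarith
    set t := |k| + 1 with htdef
    obtain ⟨h1, h2⟩ := hpos t ht0
    have h1' := h1.ne'
    have h2' := h2.ne'
    have hphi : HasDerivAt (fun s : ℝ => a * ((s - k) / (s + k))
        + b * (((s - k) / (s + k)) *
          (s - 4 * k ^ 2 / (s - k) + 4 * k * Real.log (s - k))))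
        (a * (2 * k / (t + k) ^ 2) + b * (2 * k / (t + k) ^ 2 *
          (t - 4 * k ^ 2 / (t - k) + 4 * k * Real.log (t - k)) + (t + k) / (t - k))) t := by
      have hv := aux_hF k t 0 1 h1' h2'
      simp only [zero_add, one_mul] at hv
      exact ((aux_hu k t h2').const_mul a).add (hv.const_mul b)
    have hz : HasDerivAt (fun s : ℝ => a * ((s - k) / (s + k))
        + b * (((s - k) / (s + k)) *
          (s - 4 * k ^ 2 / (s - k) + 4 * k * Real.log (s - k))))
        (0 : ℝ) t := by
      have hev : (fun s : ℝ => a * ((s - k) / (s + k))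
          + b * (((s - k) / (s + k)) *
            (s - 4 * k ^ 2 / (s - k) + 4 * k * Real.log (s - k))))
          =ᶠ[nhds t] (fun _ => (0 : ℝ)) := by
        filter_upwards [isOpen_Ioi.mem_nhds (show t ∈ Set.Ioi |k| from ht0)] with s hs
        exact hab s hs
      exact hev.hasDerivAt_iff.mpr (hasDerivAt_const t 0)
    have hder : a * (2 * k / (t + k) ^ 2) + b * (2 * k / (t + k) ^ 2 *
        (t - 4 * k ^ 2 / (t - k) + 4 * k * Real.log (t - k)) + (t + k) / (t - k)) = 0 :=
      hphi.unique hz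
    have hval := hab t ht0
    set G := t - 4 * k ^ 2 / (t - k) + 4 * k * Real.log (t - k) with hG
    have hval' : (a + b * G) * (t - k) = 0 := by
      field_simp at hval
      linarith [hval]
    have hab' : a + b * G = 0 := by
      rcases mul_eq_zero.mp hval' with h | h
      · exact h
      · exact absurd h h1'
    have hb : b = 0 := by
      have hder' : (a + b * G) * (2 * k / (t + k) ^ 2) + b * ((t + k) / (t - k)) = 0 := by
        rw [← hder]; ring
      rw [hab', zero_mul, zero_add] at hder'
      rcases mul_eq_zero.mp hder' with h | h
      · exact h
      · exact absurd h (div_ne_zero h2' h1')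
    refine ⟨?_, hb⟩
    rw [hb, zero_mul, add_zero] at hab'
    exact hab'
end

section
/- Let k ∈ ℝ, λ, m ∈ ℝ, t₊ = t+k, t₋ = t−k. The substitution ζ(t) = √(t₊t₋/t) ψ(t) transforms the scalar wave equation ψ'' + (2t/(t₊t₋))ψ' + (λ²/(t₊t₋) + m² t₊²/t₋²)ψ = 0 into ζ'' + (1/t)ζ' + Z ζ = 0 with Z = (1/(t₊²t₋²))[m²t²((t+2k)² + 2k²) − (1/4 − λ²)t² + k²(km²(4t+k) − k²/(4t²) − λ² + 3/2)], on any interval where t > 0, t₊ > 0, t₋ > 0; i.e. ψ solves the first equation iff ζ solves the second. -/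
/-- On the exact Bianchi III vacuum background with parameter `k`, the substitution
`ζ(t) = √(t₊t₋/t) ψ(t)` (with `t₊ = t+k`, `t₋ = t−k`) transforms the scalar wave
equation `ψ'' + (2t/(t₊t₋))ψ' + (λ²/(t₊t₋) + m²t₊²/t₋²)ψ = 0` into
`ζ'' + (1/t)ζ' + Z ζ = 0` with the stated coefficient `Z`, on the region where
`t > 0`, `t₊ > 0`, `t₋ > 0`. -/
theorem scalar_transform_general (k l m : ℝ) (ψ : ℝ → ℝ)
    (hψ : ContDiffOn ℝ 2 ψ {t : ℝ | 0 < t ∧ 0 < t + k ∧ 0 < t - k}) :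
    (∀ t ∈ {t : ℝ | 0 < t ∧ 0 < t + k ∧ 0 < t - k},
        deriv (deriv ψ) t + (2 * t / ((t + k) * (t - k))) * deriv ψ t
          + (l ^ 2 / ((t + k) * (t - k)) + m ^ 2 * (t + k) ^ 2 / (t - k) ^ 2) * ψ t
          = 0) ↔
    (∀ t ∈ {t : ℝ | 0 < t ∧ 0 < t + k ∧ 0 < t - k},
        deriv (deriv (fun t => Real.sqrt ((t + k) * (t - k) / t) * ψ t)) t
          + (1 / t) * deriv (fun t => Real.sqrt ((t + k) * (t - k) / t) * ψ t) t
          + ((1 / ((t + k) ^ 2 * (t - k) ^ 2)) *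
              (m ^ 2 * t ^ 2 * ((t + 2 * k) ^ 2 + 2 * k ^ 2)
                - (1 / 4 - l ^ 2) * t ^ 2
                + k ^ 2 * (k * m ^ 2 * (4 * t + k) - k ^ 2 / (4 * t ^ 2)
                    - l ^ 2 + 3 / 2))) *
            (Real.sqrt ((t + k) * (t - k) / t) * ψ t) = 0) := by
  set S : Set ℝ := {t : ℝ | 0 < t ∧ 0 < t + k ∧ 0 < t - k} with hSdef
  have hSopen : IsOpen S := by
    have : S = {t : ℝ | 0 < t} ∩ ({t : ℝ | 0 < t + k} ∩ {t : ℝ | 0 < t - k}) := by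
      ext x; simp [hSdef, and_assoc]
    rw [this]
    exact (isOpen_lt continuous_const continuous_id).inter
      ((isOpen_lt continuous_const (continuous_id.add continuous_const)).inter
       (isOpen_lt continuous_const (continuous_id.sub continuous_const)))
  set w : ℝ → ℝ := fun s => Real.sqrt ((s + k) * (s - k) / s) with hwdef
  set a : ℝ → ℝ := fun s => (s ^ 2 + k ^ 2) / (2 * s * ((s + k) * (s - k))) with hadef
  have hgpos : ∀ s ∈ S, 0 < (s + k) * (s - k) / s := fun s hs =>
    div_pos (mul_pos hs.2.1 hs.2.2) hs.1
  have hwpos : ∀ s ∈ S, 0 < w s := fun s hs => Real.sqrt_pos.mpr (hgpos s hs)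
  have hwsq : ∀ s ∈ S, w s ^ 2 = (s + k) * (s - k) / s := fun s hs =>
    Real.sq_sqrt (hgpos s hs).le
  -- derivative of w
  have hww : ∀ s ∈ S, HasDerivAt w (w s * a s) s := by
    intro s hs
    obtain ⟨hs0, hsp, hsm⟩ := hs
    have hg : HasDerivAt (fun u : ℝ => (u + k) * (u - k) / u) ((s ^ 2 + k ^ 2) / s ^ 2) s := by
      have h1 : HasDerivAt (fun u : ℝ => (u + k) * (u - k)) (1 * (s - k) + (s + k) * 1) s :=
        ((hasDerivAt_id s).add_const k).mul ((hasDerivAt_id s).sub_const k)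
      have h2 := h1.fun_div (hasDerivAt_id s) hs0.ne'
      refine h2.congr_deriv ?_
      show ((1 * (s - k) + (s + k) * 1) * s - (s + k) * (s - k) * 1) / s ^ 2 = (s ^ 2 + k ^ 2) / s ^ 2
      ring
    have hne : (s + k) * (s - k) / s ≠ 0 := (hgpos s ⟨hs0, hsp, hsm⟩).ne'
    have h3 := hg.sqrt hne
    convert h3 using 1
    have hW2 := hwsq s ⟨hs0, hsp, hsm⟩
    have hWpos := hwpos s ⟨hs0, hsp, hsm⟩
    have hww2 : w s * w s * s = (s + k) * (s - k) := by
      rw [sq] at hW2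
      field_simp at hW2
      linarith
    show w s * ((s ^ 2 + k ^ 2) / (2 * s * ((s + k) * (s - k))))
      = (s ^ 2 + k ^ 2) / s ^ 2 / (2 * w s)
    rw [← hww2]
    have hs0' : s ≠ 0 := hs0.ne'
    have hw0 : w s ≠ 0 := hWpos.ne'
    field_simp
  -- ψ derivatives
  have hψ1 : ∀ s ∈ S, HasDerivAt ψ (deriv ψ s) s := fun s hs =>
    (((hψ.differentiableOn two_ne_zero) s hs).differentiableAt
      (hSopen.mem_nhds hs)).hasDerivAt
  have hψ2 : ∀ s ∈ S, HasDerivAt (deriv ψ) (deriv (deriv ψ) s) s := by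
    intro s hs
    have hd : ContDiffOn ℝ 1 (deriv ψ) S := hψ.deriv_of_isOpen hSopen (by norm_num)
    exact (((hd.differentiableOn one_ne_zero) s hs).differentiableAt
      (hSopen.mem_nhds hs)).hasDerivAt
  -- first derivative of ζ = w * ψ
  have hζ1 : ∀ s ∈ S, HasDerivAt (fun u => w u * ψ u)
      (w s * (a s * ψ s + deriv ψ s)) s := by
    intro s hs
    have := (hww s hs).fun_mul (hψ1 s hs)
    refine this.congr_deriv ?_
    ring
  -- key pointwise identity
  have key : ∀ t ∈ S,
      deriv (deriv (fun u => w u * ψ u)) t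
        + (1 / t) * deriv (fun u => w u * ψ u) t
        + ((1 / ((t + k) ^ 2 * (t - k) ^ 2)) *
            (m ^ 2 * t ^ 2 * ((t + 2 * k) ^ 2 + 2 * k ^ 2)
              - (1 / 4 - l ^ 2) * t ^ 2
              + k ^ 2 * (k * m ^ 2 * (4 * t + k) - k ^ 2 / (4 * t ^ 2)
                  - l ^ 2 + 3 / 2))) * (w t * ψ t)
      = w t * (deriv (deriv ψ) t + (2 * t / ((t + k) * (t - k))) * deriv ψ t
          + (l ^ 2 / ((t + k) * (t - k)) + m ^ 2 * (t + k) ^ 2 / (t - k) ^ 2) * ψ t) := by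
    intro t ht
    obtain ⟨ht0, htp, htm⟩ := ht
    have htS : t ∈ S := ⟨ht0, htp, htm⟩
    have hDne : 2 * t * ((t + k) * (t - k)) ≠ 0 := by positivity
    -- derivative of a at t
    have hNum : HasDerivAt (fun s : ℝ => s ^ 2 + k ^ 2) (2 * t) t := by
      simpa using (hasDerivAt_pow 2 t).add_const (k ^ 2)
    have hDen : HasDerivAt (fun s : ℝ => 2 * s * ((s + k) * (s - k)))
        (2 * ((t + k) * (t - k)) + 2 * t * (1 * (t - k) + (t + k) * 1)) t := by
      have h := ((hasDerivAt_id t).const_mul 2).fun_mul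
        (((hasDerivAt_id t).add_const k).fun_mul ((hasDerivAt_id t).sub_const k))
      simp only [id] at h
      refine h.congr_deriv ?_
      ring
    have ha : HasDerivAt a
        ((2 * t * (2 * t * ((t + k) * (t - k)))
          - (t ^ 2 + k ^ 2) * (2 * ((t + k) * (t - k)) + 2 * t * (1 * (t - k) + (t + k) * 1)))
          / (2 * t * ((t + k) * (t - k))) ^ 2) t := hNum.div hDen hDne
    -- second derivative of ζ
    have hinner : HasDerivAt (fun s => a s * ψ s + deriv ψ s)
        (((2 * t * (2 * t * ((t + k) * (t - k)))
          - (t ^ 2 + k ^ 2) * (2 * ((t + k) * (t - k)) + 2 * t * (1 * (t - k) + (t + k) * 1)))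
          / (2 * t * ((t + k) * (t - k))) ^ 2) * ψ t + a t * deriv ψ t
          + deriv (deriv ψ) t) t :=
      (ha.mul (hψ1 t htS)).add (hψ2 t htS)
    have hζ2 : HasDerivAt (fun s => w s * (a s * ψ s + deriv ψ s))
        (w t * a t * (a t * ψ t + deriv ψ t)
          + w t * (((2 * t * (2 * t * ((t + k) * (t - k)))
            - (t ^ 2 + k ^ 2) * (2 * ((t + k) * (t - k)) + 2 * t * (1 * (t - k) + (t + k) * 1)))
            / (2 * t * ((t + k) * (t - k))) ^ 2) * ψ t + a t * deriv ψ t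
            + deriv (deriv ψ) t)) t := (hww t htS).mul hinner
    have heq : deriv (fun u => w u * ψ u) =ᶠ[nhds t]
        fun s => w s * (a s * ψ s + deriv ψ s) :=
      Filter.eventuallyEq_of_mem (hSopen.mem_nhds htS) (fun s hs => (hζ1 s hs).deriv)
    have hd2 : deriv (deriv (fun u => w u * ψ u)) t
        = w t * a t * (a t * ψ t + deriv ψ t)
          + w t * (((2 * t * (2 * t * ((t + k) * (t - k)))
            - (t ^ 2 + k ^ 2) * (2 * ((t + k) * (t - k)) + 2 * t * (1 * (t - k) + (t + k) * 1)))
            / (2 * t * ((t + k) * (t - k))) ^ 2) * ψ t + a t * deriv ψ t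
            + deriv (deriv ψ) t) := by
      rw [heq.deriv_eq]
      exact hζ2.deriv
    have hd1 : deriv (fun u => w u * ψ u) t = w t * (a t * ψ t + deriv ψ t) :=
      (hζ1 t htS).deriv
    rw [hd2, hd1, hadef]
    have h1 : t ≠ 0 := ht0.ne'
    have h2 : t + k ≠ 0 := htp.ne'
    have h3 : t - k ≠ 0 := htm.ne'
    field_simp
    ring
  constructor
  · intro h t ht
    have hk := key t ht
    rw [h t ht, mul_zero] at hk
    exact hk
  · intro h t ht
    have hk := key t ht
    rw [h t ht] at hk
    exact (mul_eq_zero.mp hk.symm).resolve_left (hwpos t ht).ne'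
end
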